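/- Every Coxeter element c of the Weyl group W has no nonzero fixed vector in V; that is, ker(c − id_V) = {0}. -/

import Mathlib

open Module

/-- A finite, reduced, crystallographic root system spanning the `ℚ`-vector space `V`,
given together with its coroots (viewed as linear functionals via the pairing
`⟨·, α^∨⟩`). -/
structure RootSystemData (V : Type*) [AddCommGroup V] [Module ℚ V] where
  /-- The set of roots `R ⊆ V`. -/
  roots : Set V
  finite : roots.Finite
  zero_not_mem : (0 : V) ∉ roots
  span_eq_top : Submodule.span ℚ roots = ⊤
  /-- The coroot pairing `x ↦ ⟨x, α^∨⟩`. -/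
  coroot : V → (V →ₗ[ℚ] ℚ)
  coroot_self : ∀ α ∈ roots, coroot α α = 2
  /-- Each reflection `s_α : x ↦ x - ⟨x, α^∨⟩α` maps `R` into itself. -/
  reflection_mem : ∀ α ∈ roots, ∀ β ∈ roots, β - coroot α β • α ∈ roots
  /-- Crystallographic condition: `⟨β, α^∨⟩ ∈ ℤ` for all roots `α, β`. -/
  crystallographic : ∀ α ∈ roots, ∀ β ∈ roots, ∃ n : ℤ, coroot α β = (n : ℚ)
  /-- Reduced: the only multiples of a root `α` which are roots are `±α`. -/
  reduced : ∀ α ∈ roots, ∀ t : ℚ, t • α ∈ roots → t = 1 ∨ t = -1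

namespace RootSystemData

variable {V : Type*} [AddCommGroup V] [Module ℚ V] (RS : RootSystemData V)

/-- The reflection `s_α` in a root `α`, as a linear endomorphism of `V`. -/
def reflMap (α : V) : V →ₗ[ℚ] V :=
  LinearMap.id - LinearMap.smulRight (RS.coroot α) α

lemma reflMap_apply (α x : V) : RS.reflMap α x = x - RS.coroot α x • α := rfl

lemma reflMap_reflMap {α : V} (h2 : RS.coroot α α = 2) (x : V) :
    RS.reflMap α (RS.reflMap α x) = x := by
  rw [reflMap_apply, reflMap_apply, map_sub, map_smul, smul_eq_mul, h2, sub_smul, mul_smul]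
  have : (2 : ℚ) • α = α + α := two_smul ℚ α
  rw [this]
  rw [smul_add]
  abel

/-- The reflection `s_α` in a root `α`, as a linear automorphism of `V`. -/
def refl (α : V) (hα : α ∈ RS.roots) : V ≃ₗ[ℚ] V :=
  LinearEquiv.ofLinear (RS.reflMap α) (RS.reflMap α)
    (by ext x; exact RS.reflMap_reflMap (RS.coroot_self α hα) x)
    (by ext x; exact RS.reflMap_reflMap (RS.coroot_self α hα) x)

/-- The Weyl group of the root system: the subgroup of `GL(V)` generated by the
reflections in the roots. -/
def weylGroup : Subgroup (V ≃ₗ[ℚ] V) :=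
  Subgroup.closure {w | ∃ (α : V) (hα : α ∈ RS.roots), w = RS.refl α hα}

/-- A base (system of simple roots) of the root system: a linearly independent spanning
subset of `R` such that every root is a linear combination of base elements with integer
coefficients which are either all nonnegative or all nonpositive. -/
structure IsBase (Δ : Finset V) : Prop where
  subset : ↑Δ ⊆ RS.roots
  indep : LinearIndependent ℚ (fun x : (Δ : Set V) => (x : V))
  span_eq_top : Submodule.span ℚ (Δ : Set V) = ⊤
  pos_or_neg : ∀ β ∈ RS.roots,
    (∃ f : V → ℕ, β = ∑ α ∈ Δ, (f α : ℚ) • α) ∨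
    (∃ f : V → ℕ, β = -∑ α ∈ Δ, (f α : ℚ) • α)

/-- A Coxeter element of the Weyl group: a product of the reflections in the simple roots
of some base, each simple root occurring exactly once, in some order. -/
def IsCoxeterElement (c : V ≃ₗ[ℚ] V) : Prop :=
  ∃ (Δ : Finset V) (hΔ : RS.IsBase Δ) (l : List {x // x ∈ Δ}),
    l.Nodup ∧ (∀ α : {x // x ∈ Δ}, α ∈ l) ∧
    c = (l.map fun α => RS.refl α.1 (hΔ.subset α.2)).prod

/-- Irreducibility of the root system: `R` admits no decomposition into two nonempty
mutually orthogonal subsets (orthogonality expressed via the coroot pairing). -/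
def IsIrreducible : Prop :=
  ∀ R₁ R₂ : Set V, R₁ ∪ R₂ = RS.roots →
    (∀ α ∈ R₁, ∀ β ∈ R₂, RS.coroot α β = 0) → R₁ = ∅ ∨ R₂ = ∅

/-- The root lattice `Q`: the subgroup of `V` generated by the roots. -/
def rootLattice : AddSubgroup V := AddSubgroup.closure RS.roots

/-- The weight lattice `P = {x ∈ V : ⟨x, α^∨⟩ ∈ ℤ for every root α}`. -/
def weightLattice : AddSubgroup V where
  carrier := {x : V | ∀ α ∈ RS.roots, ∃ n : ℤ, RS.coroot α x = (n : ℚ)}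
  zero_mem' := fun α _ => ⟨0, by simp⟩
  add_mem' := by
    rintro x y hx hy α hα
    obtain ⟨n, hn⟩ := hx α hα
    obtain ⟨m, hm⟩ := hy α hα
    exact ⟨n + m, by rw [map_add, hn, hm]; push_cast; ring⟩
  neg_mem' := by
    rintro x hx α hα
    obtain ⟨n, hn⟩ := hx α hα
    exact ⟨-n, by rw [map_neg, hn]; push_cast; ring⟩

end RootSystemData

namespace RootSystemData

variable {V : Type*} [AddCommGroup V] [Module ℚ V] (RS : RootSystemData V)

lemma refl_apply (α : V) (hα : α ∈ RS.roots) (x : V) :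
    RS.refl α hα x = x - RS.coroot α x • α := rfl

lemma refl_refl (α : V) (hα : α ∈ RS.roots) (x : V) :
    RS.refl α hα (RS.refl α hα x) = x :=
  RS.reflMap_reflMap (RS.coroot_self α hα) x

lemma refl_inv (α : V) (hα : α ∈ RS.roots) : (RS.refl α hα)⁻¹ = RS.refl α hα := by
  apply inv_eq_of_mul_eq_one_right
  ext x
  exact RS.refl_refl α hα x

lemma refl_mem_weylGroup (α : V) (hα : α ∈ RS.roots) : RS.refl α hα ∈ RS.weylGroup :=
  Subgroup.subset_closure ⟨α, hα, rfl⟩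

lemma weylGroup_maps_roots {g : V ≃ₗ[ℚ] V} (hg : g ∈ RS.weylGroup) :
    ∀ β ∈ RS.roots, g β ∈ RS.roots := by
  refine Subgroup.closure_induction
    (p := fun g _ => ∀ β ∈ RS.roots, g β ∈ RS.roots) ?_ ?_ ?_ ?_ hg
  · rintro x ⟨α, hα, rfl⟩ β hβ
    exact RS.reflection_mem α hα β hβ
  · intro β hβ; simpa using hβ
  · intro x y _ _ hx hy β hβ
    exact hx _ (hy β hβ)
  · rintro x hx hmaps β hβ
    -- x⁻¹ maps roots: x restricted to roots is injective on a finite set, hence surjective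
    -- use: x permutes roots since injective self-map of finite set mapping into itself
    have hfin := RS.finite
    have hinj : Set.InjOn x RS.roots := fun a _ b _ hab => x.injective hab
    have hsurj := Set.Finite.surjOn_iff_bijOn_of_mapsTo (f := (x : V → V)) (s := RS.roots) hfin
    have hmapsTo : Set.MapsTo (x : V → V) RS.roots RS.roots := fun a ha => hmaps a ha
    have hbij : Set.BijOn (x : V → V) RS.roots RS.roots :=
      (Set.Finite.injOn_iff_bijOn_of_mapsTo hfin hmapsTo).mp hinj
    obtain ⟨γ, hγ, hγβ⟩ := hbij.surjOn hβ
    have : x⁻¹ β = γ := by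
      have : x γ = β := hγβ
      calc x⁻¹ β = x⁻¹ (x γ) := by rw [this]
        _ = γ := x.symm_apply_apply γ
    rw [this]; exact hγ

lemma weylGroup_finite : Finite RS.weylGroup := by
  haveI : Finite RS.roots := RS.finite.to_subtype
  have key : Function.Injective
      (fun (g : RS.weylGroup) => (fun β : RS.roots =>
        (⟨(g : V ≃ₗ[ℚ] V) β, RS.weylGroup_maps_roots g.2 β β.2⟩ : RS.roots))) := by
    intro g h hgh
    have heq : ∀ β ∈ RS.roots, (g : V ≃ₗ[ℚ] V) β = (h : V ≃ₗ[ℚ] V) β := by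
      intro β hβ
      have := congrFun hgh ⟨β, hβ⟩
      exact congrArg Subtype.val this
    have : (g : V ≃ₗ[ℚ] V) = (h : V ≃ₗ[ℚ] V) := by
      apply LinearEquiv.toLinearMap_injective
      exact LinearMap.ext_on RS.span_eq_top heq
    exact Subtype.ext this
  exact Finite.of_injective _ key

end RootSystemData
namespace RootSystemData

variable {V : Type*} [AddCommGroup V] [Module ℚ V] (RS : RootSystemData V)

lemma exists_invariant_form [FiniteDimensional ℚ V] :
    ∃ B : V →ₗ[ℚ] V →ₗ[ℚ] ℚ,
      (∀ g ∈ RS.weylGroup, ∀ x y : V, B (g x) (g y) = B x y) ∧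
      (∀ x : V, 0 ≤ B x x) ∧ (∀ x : V, B x x = 0 → x = 0) := by
  letI : Finite RS.weylGroup := RS.weylGroup_finite
  letI : Fintype RS.weylGroup := Fintype.ofFinite _
  set b := Module.finBasis ℚ V with hb
  set B0 : V →ₗ[ℚ] V →ₗ[ℚ] ℚ := ∑ i, (b.coord i).smulRight (b.coord i) with hB0
  have hB0_apply : ∀ x y : V, B0 x y = ∑ i, b.coord i x * b.coord i y := by
    intro x y
    simp [hB0, LinearMap.sum_apply, LinearMap.smulRight_apply, smul_eq_mul]
  refine ⟨∑ g : RS.weylGroup, B0.compl₁₂ ((g : V ≃ₗ[ℚ] V) : V →ₗ[ℚ] V)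
      ((g : V ≃ₗ[ℚ] V) : V →ₗ[ℚ] V), ?_, ?_, ?_⟩
  · intro s hs x y
    simp only [LinearMap.sum_apply, LinearMap.compl₁₂_apply, LinearMap.coe_coe]
    refine Fintype.sum_equiv (Equiv.mulRight (⟨s, hs⟩ : RS.weylGroup)) _ _ ?_
    intro k
    simp [Subgroup.coe_mul]
  · intro x
    simp only [LinearMap.sum_apply, LinearMap.compl₁₂_apply, LinearMap.coe_coe]
    refine Finset.sum_nonneg fun g _ => ?_
    rw [hB0_apply]
    exact Finset.sum_nonneg fun i _ => mul_self_nonneg _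
  · intro x hx
    simp only [LinearMap.sum_apply, LinearMap.compl₁₂_apply, LinearMap.coe_coe] at hx
    have h1 : B0 x x = 0 := by
      have := (Finset.sum_eq_zero_iff_of_nonneg (fun g _ => by
        rw [hB0_apply]; exact Finset.sum_nonneg fun i _ => mul_self_nonneg _)).mp hx 1
        (Finset.mem_univ _)
      simpa using this
    rw [hB0_apply] at h1
    have hcoord : ∀ i, b.coord i x = 0 := by
      intro i
      have := (Finset.sum_eq_zero_iff_of_nonneg (fun i _ => mul_self_nonneg _)).mp h1 i
        (Finset.mem_univ _)
      exact mul_self_eq_zero.mp this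
    have : b.repr x = 0 := by
      ext i
      exact hcoord i
    simpa using congrArg b.repr.symm this

lemma coroot_mul_form (B : V →ₗ[ℚ] V →ₗ[ℚ] ℚ)
    (hinv : ∀ g ∈ RS.weylGroup, ∀ x y : V, B (g x) (g y) = B x y)
    {α : V} (hα : α ∈ RS.roots) (v : V) :
    RS.coroot α v * B α α = 2 * B α v := by
  have h := hinv _ (RS.refl_mem_weylGroup α hα) α v
  rw [RS.refl_apply, RS.refl_apply, RS.coroot_self α hα] at h
  simp only [map_sub, map_smul, LinearMap.sub_apply, LinearMap.smul_apply, smul_eq_mul] at h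
  linear_combination h

end RootSystemData
namespace RootSystemData

variable {V : Type*} [AddCommGroup V] [Module ℚ V] (RS : RootSystemData V)

lemma prod_refl_sub_mem_span (Δ : Finset V) (hΔ : RS.IsBase Δ)
    (l : List {x // x ∈ Δ}) (x : V) :
    (l.map fun α => RS.refl α.1 (hΔ.subset α.2)).prod x - x ∈
      Submodule.span ℚ (Subtype.val '' {a : {x // x ∈ Δ} | a ∈ l}) := by
  induction l with
  | nil => simp
  | cons a l ih =>
    rw [List.map_cons, List.prod_cons]
    have hPx : (RS.refl a.1 (hΔ.subset a.2) * (l.map fun α => RS.refl α.1 (hΔ.subset α.2)).prod) x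
        = (l.map fun α => RS.refl α.1 (hΔ.subset α.2)).prod x
          - RS.coroot a.1 ((l.map fun α => RS.refl α.1 (hΔ.subset α.2)).prod x) • a.1 := rfl
    rw [hPx]
    have hsub : Subtype.val '' {b : {x // x ∈ Δ} | b ∈ l} ⊆
        Subtype.val '' {b : {x // x ∈ Δ} | b ∈ a :: l} := by
      apply Set.image_mono
      intro b hb
      exact List.mem_cons_of_mem _ hb
    have h1 : (l.map fun α => RS.refl α.1 (hΔ.subset α.2)).prod x - x ∈
        Submodule.span ℚ (Subtype.val '' {b : {x // x ∈ Δ} | b ∈ a :: l}) :=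
      Submodule.span_mono hsub (ih)
    have h2 : (a : V) ∈ Submodule.span ℚ (Subtype.val '' {b : {x // x ∈ Δ} | b ∈ a :: l}) :=
      Submodule.subset_span ⟨a, List.mem_cons_self, rfl⟩
    have := sub_mem h1 (Submodule.smul_mem _
      (RS.coroot a.1 ((l.map fun α => RS.refl α.1 (hΔ.subset α.2)).prod x)) h2)
    convert this using 1
    abel

lemma coroot_eq_zero_of_fixed (Δ : Finset V) (hΔ : RS.IsBase Δ)
    (l : List {x // x ∈ Δ}) (hnd : l.Nodup) (x : V)
    (hx : (l.map fun α => RS.refl α.1 (hΔ.subset α.2)).prod x = x) :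
    ∀ α ∈ l, RS.coroot α.1 x = 0 := by
  induction l with
  | nil => simp
  | cons a l ih =>
    rw [List.nodup_cons] at hnd
    set P := (l.map fun α => RS.refl α.1 (hΔ.subset α.2)).prod with hP
    rw [List.map_cons, List.prod_cons] at hx
    have hx' : RS.refl a.1 (hΔ.subset a.2) (P x) = x := hx
    have h2 : P x = RS.refl a.1 (hΔ.subset a.2) x := by
      have := congrArg (RS.refl a.1 (hΔ.subset a.2)) hx'
      rwa [RS.refl_refl] at this
    have h3 : P x - x = -(RS.coroot a.1 x • (a : V)) := by
      rw [h2, RS.refl_apply]; abel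
    have h4 := RS.prod_refl_sub_mem_span Δ hΔ l x
    rw [← hP, h3] at h4
    have h5 : RS.coroot a.1 x • (a : V) ∈
        Submodule.span ℚ (Subtype.val '' {b : {x // x ∈ Δ} | b ∈ l}) := by
      simpa using neg_mem h4
    have hc0 : RS.coroot a.1 x = 0 := by
      by_contra hne
      have ha_mem : (a : V) ∈
          Submodule.span ℚ (Subtype.val '' {b : {x // x ∈ Δ} | b ∈ l}) := by
        have := Submodule.smul_mem _ (RS.coroot a.1 x)⁻¹ h5
        rwa [smul_smul, inv_mul_cancel₀ hne, one_smul] at this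
      -- contradiction with linear independence
      have haΔ : (a : V) ∈ (Δ : Set V) := a.2
      have hnot := hΔ.indep.notMem_span_image
        (s := {j : (Δ : Set V) | (j : V) ≠ (a : V)}) (x := ⟨(a : V), haΔ⟩)
        (by simp)
      apply hnot
      refine Submodule.span_mono ?_ ha_mem
      rintro v ⟨b, hb, rfl⟩
      have hba : (b : V) ≠ (a : V) := by
        intro h
        exact hnd.1 (by rwa [Subtype.ext h] at hb)
      exact ⟨⟨(b : V), b.2⟩, hba, rfl⟩
    have hPx : P x = x := by
      rw [h2, RS.refl_apply, hc0, zero_smul, sub_zero]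
    intro α hα
    rcases List.mem_cons.mp hα with h | h
    · rw [h]; exact hc0
    · exact ih hnd.2 hPx α h

end RootSystemData
/-- Every Coxeter element `c` of the Weyl group `W` has no nonzero fixed
vector in `V`: `ker (c - id_V) = {0}`. -/
theorem RootSystemData.ker_coxeterElement_sub_id_eq_bot
    {V : Type*} [AddCommGroup V] [Module ℚ V] [FiniteDimensional ℚ V]
    (RS : RootSystemData V) (c : V ≃ₗ[ℚ] V) (hc : RS.IsCoxeterElement c) :
    LinearMap.ker ((c : V →ₗ[ℚ] V) - LinearMap.id) = ⊥ := by
  obtain ⟨Δ, hΔ, l, hnd, hall, hcprod⟩ := hc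
  rw [Submodule.eq_bot_iff]
  intro x hx
  have hfix : c x = x := by
    have h := LinearMap.mem_ker.mp hx
    rw [LinearMap.sub_apply, LinearMap.id_apply, sub_eq_zero] at h
    exact h
  rw [hcprod] at hfix
  have hzero := RS.coroot_eq_zero_of_fixed Δ hΔ l hnd x hfix
  obtain ⟨B, hinv, hnn, hdef⟩ := RS.exists_invariant_form
  have hBα : ∀ α ∈ Δ, B α x = 0 := by
    intro α hαΔ
    have hαr : α ∈ RS.roots := hΔ.subset hαΔ
    have hmul := RS.coroot_mul_form B hinv hαr x
    have hc0 : RS.coroot α x = 0 := hzero ⟨α, hαΔ⟩ (hall _)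
    rw [hc0] at hmul
    linarith
  have hle : (⊤ : Submodule ℚ V) ≤ LinearMap.ker (B.flip x) := by
    rw [← hΔ.span_eq_top, Submodule.span_le]
    intro y hy
    rw [SetLike.mem_coe, LinearMap.mem_ker, LinearMap.flip_apply]
    exact hBα y hy
  have hBxx : B x x = 0 := by
    have := hle (Submodule.mem_top (x := x))
    rwa [LinearMap.mem_ker, LinearMap.flip_apply] at this
  exact hdef x hBxx
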